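/- Let M be a 4-orbit maniplex of rank n-1. Then exactly one of the following holds: (1) M is fully-transitive; (2) there exists i such that M is j-face-transitive for all j ≠ i; (3) there exist distinct i, k such that M is j-face-transitive for all j ∉ {i,k}; (4) there exists i such that M is j-face-transitive for all j ∉ {i-1, i, i+1}. In particular, a 4-orbit maniplex fails to be face-transitive in at most three ranks, and if in three ranks, they are consecutive. -/

import Mathlib

/-- A symmetry type graph: a connected pregraph (semi-edges allowed, encoded as
fixed points), properly edge-coloured with `n` colours, so that each vertex is
incident to exactly one edge or semi-edge of each colour, and satisfying the
4-cycle quotient condition: if a vertex has non-semi-edges of colours `i, j`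
with `|i - j| ≥ 2`, then the `(i,j)`-component containing it has 4 vertices. -/
structure SymGraph (n : ℕ) (V : Type) where
  m : Fin n → Equiv.Perm V
  invol : ∀ c, m c * m c = 1
  conn : ∀ u v : V, ∃ g ∈ Subgroup.closure (Set.range m), g u = v
  quot4 : ∀ i j : Fin n, (i : ℕ) + 2 ≤ (j : ℕ) → ∀ v : V, m i v ≠ v → m j v ≠ v →
    (MulAction.orbit (Subgroup.closure ({m i, m j} : Set (Equiv.Perm V))) v).ncard = 4

/-- `T^i` is connected: any two vertices are joined by a walk avoiding colour `i`. -/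
def SymGraph.delConn {n : ℕ} {V : Type} (G : SymGraph n V) (i : Fin n) : Prop :=
  ∀ u v : V, ∃ g ∈ Subgroup.closure (G.m '' {c : Fin n | c ≠ i}), g u = v

section Aux

set_option synthInstance.maxHeartbeats 400000 in
set_option synthInstance.maxSize 1024 in
lemma core4 : ∀ σ τ ρ : Equiv.Perm (Fin 4), σ * σ = 1 → τ * τ = 1 →
    σ ≠ 1 → τ ≠ 1 → ρ ≠ 1 → ρ ≠ σ → ρ ≠ τ → (∀ v, σ v = v ∨ τ v = v) →
    ((∃ v, σ v ≠ v ∧ ρ v ≠ v) ∧ (∃ w, τ w ≠ w ∧ ρ w ≠ w)) := by decide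

lemma coreV {V : Type} [Fintype V] (h4 : Fintype.card V = 4)
    (σ τ ρ : Equiv.Perm V) (hσ2 : σ * σ = 1) (hτ2 : τ * τ = 1)
    (hσ1 : σ ≠ 1) (hτ1 : τ ≠ 1) (hρ1 : ρ ≠ 1) (hρσ : ρ ≠ σ) (hρτ : ρ ≠ τ)
    (hστ : ∀ v, σ v = v ∨ τ v = v) :
    (∃ v, σ v ≠ v ∧ ρ v ≠ v) ∧ (∃ w, τ w ≠ w ∧ ρ w ≠ w) := by
  classical
  let e : V ≃ Fin 4 := Fintype.equivFinOfCardEq h4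
  let F : Equiv.Perm V ≃ Equiv.Perm (Fin 4) := e.permCongr
  have hFapp : ∀ (p : Equiv.Perm V) (x : Fin 4), F p x = e (p (e.symm x)) := by
    intro p x; simp [F, Equiv.permCongr_apply]
  have hF1 : F 1 = 1 := by
    ext x; simp [hFapp]
  have hFmul : ∀ a b : Equiv.Perm V, F (a * b) = F a * F b := by
    intro a b; ext x; simp [hFapp, Equiv.Perm.mul_apply]
  have h := core4 (F σ) (F τ) (F ρ)
    (by rw [← hFmul, hσ2, hF1]) (by rw [← hFmul, hτ2, hF1])
    (fun h => hσ1 (F.injective (h.trans hF1.symm)))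
    (fun h => hτ1 (F.injective (h.trans hF1.symm)))
    (fun h => hρ1 (F.injective (h.trans hF1.symm)))
    (fun h => hρσ (F.injective h))
    (fun h => hρτ (F.injective h))
    (by
      intro x
      rcases hστ (e.symm x) with h | h
      · left; rw [hFapp, h]; simp
      · right; rw [hFapp, h]; simp)
  obtain ⟨⟨v, h1, h2⟩, ⟨w, h3, h4'⟩⟩ := h
  refine ⟨⟨e.symm v, ?_, ?_⟩, ⟨e.symm w, ?_, ?_⟩⟩
  · intro hcon; exact h1 (by rw [hFapp, hcon]; simp)
  · intro hcon; exact h2 (by rw [hFapp, hcon]; simp)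
  · intro hcon; exact h3 (by rw [hFapp, hcon]; simp)
  · intro hcon; exact h4' (by rw [hFapp, hcon]; simp)

lemma delConn_of_mem {n : ℕ} {V : Type} (G : SymGraph n V) (i : Fin n)
    (h : G.m i ∈ Subgroup.closure (G.m '' {c : Fin n | c ≠ i})) : G.delConn i := by
  intro u v
  obtain ⟨g, hg, hgu⟩ := G.conn u v
  refine ⟨g, ?_, hgu⟩
  have hle : Subgroup.closure (Set.range G.m) ≤
      Subgroup.closure (G.m '' {c : Fin n | c ≠ i}) := by
    apply (Subgroup.closure_le _).mpr
    rintro _ ⟨c, rfl⟩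
    by_cases hc : c = i
    · subst hc; exact h
    · exact Subgroup.subset_closure ⟨c, hc, rfl⟩
  exact hle hg

lemma delConn_of_quot {n : ℕ} {V : Type} [Fintype V] (h4 : Fintype.card V = 4)
    (G : SymGraph n V) (p q r : Fin n) (hpq : (p : ℕ) + 2 ≤ (q : ℕ))
    (hrp : r ≠ p) (hrq : r ≠ q) (v : V)
    (hv1 : G.m p v ≠ v) (hv2 : G.m q v ≠ v) : G.delConn r := by
  set H := Subgroup.closure ({G.m p, G.m q} : Set (Equiv.Perm V)) with hH
  have horb := G.quot4 p q hpq v hv1 hv2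
  have horb' : MulAction.orbit H v = Set.univ := by
    apply Set.eq_of_subset_of_ncard_le (Set.subset_univ _)
    rw [horb, Set.ncard_univ, Nat.card_eq_fintype_card, h4]
  have hle : H ≤ Subgroup.closure (G.m '' {c : Fin n | c ≠ r}) := by
    apply (Subgroup.closure_le _).mpr
    rintro x hx
    simp only [Set.mem_insert_iff, Set.mem_singleton_iff] at hx
    rcases hx with rfl | rfl
    · exact Subgroup.subset_closure ⟨p, fun h => hrp h.symm, rfl⟩
    · exact Subgroup.subset_closure ⟨q, fun h => hrq h.symm, rfl⟩
  intro u w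
  have hu : u ∈ MulAction.orbit H v := horb' ▸ Set.mem_univ u
  have hw : w ∈ MulAction.orbit H v := horb' ▸ Set.mem_univ w
  obtain ⟨g1, hg1⟩ := hu
  obtain ⟨g2, hg2⟩ := hw
  refine ⟨(g2 : Equiv.Perm V) * (g1 : Equiv.Perm V)⁻¹,
    hle (mul_mem g2.2 (inv_mem g1.2)), ?_⟩
  have hg1' : (g1 : Equiv.Perm V) v = u := hg1
  have hg2' : (g2 : Equiv.Perm V) v = w := hg2
  rw [← hg1', Equiv.Perm.mul_apply, Equiv.Perm.inv_def, Equiv.symm_apply_apply, hg2']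

lemma key {n : ℕ} {V : Type} [Fintype V] (h4 : Fintype.card V = 4)
    (G : SymGraph n V) (i j t : Fin n) (hij : (i : ℕ) + 2 ≤ (j : ℕ))
    (hi : ¬ G.delConn i) (hj : ¬ G.delConn j) (ht : ¬ G.delConn t)
    (hti : t ≠ i) (htj : t ≠ j) :
    ((t : ℕ) + 1 = i ∨ (i : ℕ) + 1 = t) ∧ ((t : ℕ) + 1 = j ∨ (j : ℕ) + 1 = t) := by
  have hdisj : ∀ v : V, G.m i v = v ∨ G.m j v = v := by
    intro v
    by_contra hc
    push_neg at hc
    exact ht (delConn_of_quot h4 G i j t hij hti htj v hc.1 hc.2)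
  have hmi1 : G.m i ≠ 1 := fun h => hi (delConn_of_mem G i (h ▸ one_mem _))
  have hmj1 : G.m j ≠ 1 := fun h => hj (delConn_of_mem G j (h ▸ one_mem _))
  have hmt1 : G.m t ≠ 1 := fun h => ht (delConn_of_mem G t (h ▸ one_mem _))
  have hmti : G.m t ≠ G.m i := by
    intro h
    exact hi (delConn_of_mem G i (h ▸ Subgroup.subset_closure ⟨t, hti, rfl⟩))
  have hmtj : G.m t ≠ G.m j := by
    intro h
    exact hj (delConn_of_mem G j (h ▸ Subgroup.subset_closure ⟨t, htj, rfl⟩))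
  obtain ⟨⟨v, hvi, hvt⟩, ⟨w, hwj, hwt⟩⟩ :=
    coreV h4 (G.m i) (G.m j) (G.m t) (G.invol i) (G.invol j)
      hmi1 hmj1 hmt1 hmti hmtj hdisj
  have hti' : (t : ℕ) ≠ (i : ℕ) := fun h => hti (Fin.ext h)
  have htj' : (t : ℕ) ≠ (j : ℕ) := fun h => htj (Fin.ext h)
  constructor
  · by_contra hc
    push_neg at hc
    have hcase : (i : ℕ) + 2 ≤ (t : ℕ) ∨ (t : ℕ) + 2 ≤ (i : ℕ) := by omega
    rcases hcase with h' | h'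
    · exact hj (delConn_of_quot h4 G i t j h'
        (fun h => hti' (by omega)) htj.symm v hvi hvt)
    · exact hj (delConn_of_quot h4 G t i j h'
        htj.symm (fun h => hti' (by omega)) v hvt hvi)
  · by_contra hc
    push_neg at hc
    have hcase : (j : ℕ) + 2 ≤ (t : ℕ) ∨ (t : ℕ) + 2 ≤ (j : ℕ) := by omega
    rcases hcase with h' | h'
    · exact hi (delConn_of_quot h4 G j t i h'
        (fun h => hti' (by omega)) hti.symm w hwj hwt)
    · exact hi (delConn_of_quot h4 G t j i h'
        hti.symm (fun h => htj' (by omega)) w hwt hwj)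

lemma finalCase {n : ℕ} {V : Type} [Fintype V] (h4 : Fintype.card V = 4)
    (G : SymGraph n V) (a b c : Fin n)
    (ha : ¬ G.delConn a) (hb : ¬ G.delConn b) (hc : ¬ G.delConn c)
    (hab : (a : ℕ) < (b : ℕ)) (hbc : (b : ℕ) < (c : ℕ)) :
    ∃ j : ℕ, j + 2 < n ∧
      {i : Fin n | ¬ G.delConn i} =
        {x : Fin n | (x : ℕ) = j ∨ (x : ℕ) = j + 1 ∨ (x : ℕ) = j + 2} := by
  have hac : (a : ℕ) + 2 ≤ (c : ℕ) := by omega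
  have hba : b ≠ a := fun h => by rw [h] at hab; omega
  have hbc' : b ≠ c := fun h => by rw [h] at hbc; omega
  obtain ⟨hk1, hk2⟩ := key h4 G a c b hac ha hc hb hba hbc'
  have hbv : (b : ℕ) = (a : ℕ) + 1 := by rcases hk1 with h | h <;> omega
  have hcv : (c : ℕ) = (a : ℕ) + 2 := by rcases hk2 with h | h <;> omega
  refine ⟨(a : ℕ), by have := c.isLt; omega, ?_⟩
  ext x
  simp only [Set.mem_setOf_eq]
  constructor
  · intro hx
    by_cases hxa : x = a
    · left; rw [hxa]
    by_cases hxc : x = c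
    · right; right; rw [hxc]; omega
    obtain ⟨p1, p2⟩ := key h4 G a c x hac ha hc hx hxa hxc
    right; left
    rcases p1 with h | h <;> rcases p2 with h' | h' <;> omega
  · intro hx
    rcases hx with h | h | h
    · exact (Fin.ext h : x = a) ▸ ha
    · exact (Fin.ext (by omega : (x : ℕ) = (b : ℕ)) : x = b) ▸ hb
    · exact (Fin.ext (by omega : (x : ℕ) = (c : ℕ)) : x = c) ▸ hc

end Aux

/-- Classification of the failure of face-transitivity for a 4-orbit maniplex:
the set `D` of ranks `i` for which `T^i` is disconnected (i.e. `M` is not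
`i`-face-transitive) is empty, a singleton, a pair, or a set of three
consecutive colours `{j, j+1, j+2}`. -/

theorem stmt8 (n : ℕ) (V : Type) [Fintype V] (h4 : Fintype.card V = 4)
    (G : SymGraph n V) :
    {i : Fin n | ¬ G.delConn i} = (∅ : Set (Fin n)) ∨
    (∃ i : Fin n, {i : Fin n | ¬ G.delConn i} = {i}) ∨
    (∃ i k : Fin n, i ≠ k ∧ {i : Fin n | ¬ G.delConn i} = {i, k}) ∨
    (∃ j : ℕ, j + 2 < n ∧
      {i : Fin n | ¬ G.delConn i} =
        {c : Fin n | (c : ℕ) = j ∨ (c : ℕ) = j + 1 ∨ (c : ℕ) = j + 2}) := by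
  classical
  by_cases h0 : ∀ c : Fin n, G.delConn c
  · left; ext c; simp [h0 c]
  push_neg at h0
  obtain ⟨i, hi⟩ := h0
  by_cases h1 : ∀ c : Fin n, ¬ G.delConn c → c = i
  · right; left
    refine ⟨i, ?_⟩
    ext c
    simp only [Set.mem_setOf_eq, Set.mem_singleton_iff]
    exact ⟨h1 c, fun h => h ▸ hi⟩
  push_neg at h1
  obtain ⟨k, hk, hki⟩ := h1
  by_cases h2 : ∀ c : Fin n, ¬ G.delConn c → c = i ∨ c = k
  · right; right; left
    refine ⟨i, k, hki.symm, ?_⟩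
    ext c
    simp only [Set.mem_setOf_eq, Set.mem_insert_iff, Set.mem_singleton_iff]
    refine ⟨h2 c, ?_⟩
    rintro (rfl | rfl)
    · exact hi
    · exact hk
  push_neg at h2
  obtain ⟨t, ht, hti, htk⟩ := h2
  right; right; right
  have hik' : (i : ℕ) ≠ (k : ℕ) := fun h => hki (Fin.ext h.symm)
  have hti' : (t : ℕ) ≠ (i : ℕ) := fun h => hti (Fin.ext h)
  have htk' : (t : ℕ) ≠ (k : ℕ) := fun h => htk (Fin.ext h)
  rcases lt_trichotomy (i : ℕ) (k : ℕ) with h1 | h1 | h1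
  · rcases lt_trichotomy (t : ℕ) (i : ℕ) with h2 | h2 | h2
    · exact finalCase h4 G t i k ht hi hk h2 h1
    · exact absurd h2 hti'
    · rcases lt_trichotomy (t : ℕ) (k : ℕ) with h3 | h3 | h3
      · exact finalCase h4 G i t k hi ht hk h2 h3
      · exact absurd h3 htk'
      · exact finalCase h4 G i k t hi hk ht h1 h3
  · exact absurd h1 hik'
  · rcases lt_trichotomy (t : ℕ) (k : ℕ) with h2 | h2 | h2
    · exact finalCase h4 G t k i ht hk hi h2 h1
    · exact absurd h2 htk'
    · rcases lt_trichotomy (t : ℕ) (i : ℕ) with h3 | h3 | h3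
      · exact finalCase h4 G k t i hk ht hi h2 h3
      · exact absurd h3 hti'
      · exact finalCase h4 G k i t hk hi ht h1 h3
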